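/- Let A be an infinite Boolean algebra that is ω-free over some subset G ⊆ A, and let W be a set with the same cardinality as A. Then there exists a surjective Boolean algebra homomorphism from A onto the finite–cofinite algebra on W (the Boolean algebra of subsets of W that are finite or cofinite). -/

import Mathlib

universe u v

/-- The finite–cofinite algebra on `W`: subsets of `W` that are finite or cofinite. -/
def FinCo (W : Type u) : Type u := {s : Set W // s.Finite ∨ sᶜ.Finite}

namespace FinCo

variable {W : Type u}

instance : Max (FinCo W) :=
  ⟨fun s t => ⟨s.1 ∪ t.1, by
    rcases s.2 with hs | hs
    · rcases t.2 with ht | ht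
      · exact Or.inl (hs.union ht)
      · exact Or.inr (ht.subset (by rw [Set.compl_union]; exact Set.inter_subset_right))
    · exact Or.inr (hs.subset (by rw [Set.compl_union]; exact Set.inter_subset_left))⟩⟩

instance : Min (FinCo W) :=
  ⟨fun s t => ⟨s.1 ∩ t.1, by
    rcases s.2 with hs | hs
    · exact Or.inl (hs.subset Set.inter_subset_left)
    · rcases t.2 with ht | ht
      · exact Or.inl (ht.subset Set.inter_subset_right)
      · exact Or.inr (by rw [Set.compl_inter]; exact hs.union ht)⟩⟩

instance : Top (FinCo W) := ⟨⟨Set.univ, Or.inr (by simp)⟩⟩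

instance : Bot (FinCo W) := ⟨⟨∅, Or.inl (Set.finite_empty)⟩⟩

instance : Compl (FinCo W) := ⟨fun s => ⟨s.1ᶜ, by rcases s.2 with hs | hs <;> simp [hs]⟩⟩

instance : SDiff (FinCo W) := ⟨fun s t => s ⊓ tᶜ⟩

instance : HImp (FinCo W) := ⟨fun s t => sᶜ ⊔ t⟩

instance : LE (FinCo W) := ⟨fun s t => s.1 ≤ t.1⟩

instance : LT (FinCo W) := ⟨fun s t => s.1 < t.1⟩

instance : BooleanAlgebra (FinCo W) :=
  Function.Injective.booleanAlgebra (fun s : FinCo W => s.1) Subtype.coe_injective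
    Iff.rfl Iff.rfl
    (fun _ _ => rfl) (fun _ _ => rfl) rfl rfl (fun _ => rfl)
    (fun a b => (Set.diff_eq a.1 b.1).symm)
    (fun a b => by show a.1ᶜ ∪ b.1 = a.1 ⇨ b.1; rw [himp_eq]; exact Set.union_comm _ _)

end FinCo

/-- A function `f` (restricted to `X`) is ω-preserving: for every finite `H ⊆ X`
with `inf H = ⊥`, the infimum of the image is `⊥`. -/
def OmegaPreserving {α : Type u} {β : Type v} [BooleanAlgebra α] [BooleanAlgebra β]
    (X : Set α) (f : α → β) : Prop :=
  ∀ H : Finset α, ↑H ⊆ X → H.inf id = ⊥ → H.inf f = ⊥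

/-- `A` is ω-free over `X`: every ω-preserving function from `X` into any nontrivial
Boolean algebra extends to a unique Boolean algebra homomorphism. -/
def OmegaFree {α : Type u} [BooleanAlgebra α] (X : Set α) : Prop :=
  ∀ (β : Type v) [BooleanAlgebra β] [Nontrivial β] (f : α → β),
    OmegaPreserving X f → ∃! g : BoundedLatticeHom α β, ∀ x ∈ X, g x = f x


namespace OmegaFreeAux

open Order

variable {α : Type u} [BooleanAlgebra α]

/-- The two-element-like Boolean algebra `Set PUnit` in universe `v`. -/
abbrev Two : Type v := Set PUnit.{v + 1}

/-- The bounded lattice homomorphism `α → Set PUnit` associated to a prime ideal. -/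
def primeHom (P : Order.Ideal α) (hP : Order.Ideal.IsPrime P) :
    BoundedLatticeHom α Two.{v} where
  toFun a := {_u : PUnit | a ∉ P}
  map_sup' a b := by
    ext u
    simp only [Set.sup_eq_union, Set.mem_union, Set.mem_setOf_eq]
    constructor
    · intro h
      by_contra hc
      push_neg at hc
      exact h (P.sup_mem hc.1 hc.2)
    · rintro (h | h) hs
      · exact h (P.lower le_sup_left hs)
      · exact h (P.lower le_sup_right hs)
  map_inf' a b := by
    ext u
    simp only [Set.inf_eq_inter, Set.mem_inter_iff, Set.mem_setOf_eq]
    constructor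
    · intro h
      exact ⟨fun ha => h (P.lower inf_le_left ha), fun hb => h (P.lower inf_le_right hb)⟩
    · rintro ⟨ha, hb⟩ hab
      rcases hP.mem_or_mem hab with h | h
      exacts [ha h, hb h]
  map_top' := by
    ext u
    simp only [Set.top_eq_univ, Set.mem_univ, iff_true, Set.mem_setOf_eq]
    exact hP.toIsProper.top_notMem
  map_bot' := by
    ext u
    simp only [Set.bot_eq_empty, Set.mem_empty_iff_false, iff_false, Set.mem_setOf_eq, not_not]
    exact P.bot_mem

@[simp] lemma primeHom_apply (P : Order.Ideal α) (hP : Order.Ideal.IsPrime P) (a : α) :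
    primeHom.{u, v} P hP a = {_u : PUnit | a ∉ P} := rfl

lemma exists_primeIdeal {a b : α} (hab : ¬a ≤ b) :
    ∃ P : Order.Ideal α, P.IsPrime ∧ a ∉ P ∧ b ∈ P := by
  have hc : a ⊓ bᶜ ≠ ⊥ := by
    rw [← sdiff_eq]
    exact fun h => hab (sdiff_eq_bot_iff.mp h)
  have hdis : Disjoint ((Order.PFilter.principal (a ⊓ bᶜ) : Order.PFilter α) : Set α)
      ((Order.Ideal.principal (⊥ : α) : Order.Ideal α) : Set α) := by
    rw [Set.disjoint_left]
    intro x hxF hxI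
    have h1 : a ⊓ bᶜ ≤ x := hxF
    have h2 : x ≤ ⊥ := hxI
    exact hc (le_bot_iff.mp (h1.trans h2))
  obtain ⟨P, hprime, _, hdisj⟩ := DistribLattice.prime_ideal_of_disjoint_filter_ideal hdis
  have hmemF : a ⊓ bᶜ ∈ (Order.PFilter.principal (a ⊓ bᶜ) : Order.PFilter α) :=
    Order.PFilter.mem_principal.mpr le_rfl
  have hnotP : a ⊓ bᶜ ∉ P := Set.disjoint_left.mp hdisj hmemF
  refine ⟨P, hprime, fun haP => hnotP (P.lower inf_le_left haP), ?_⟩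
  have hbc : bᶜ ∉ P := fun hh => hnotP (P.lower inf_le_right hh)
  rcases hprime.mem_or_mem (show b ⊓ bᶜ ∈ P by rw [inf_compl_eq_bot]; exact P.bot_mem) with h | h
  exacts [h, absurd h hbc]

lemma exists_hom_ne {a b : α} (hab : a ≠ b) :
    ∃ h : BoundedLatticeHom α Two.{v}, h a ≠ h b := by
  have sep : ∀ {x y : α}, ¬x ≤ y → ∃ h : BoundedLatticeHom α Two.{v}, h x ≠ h y := by
    intro x y hxy
    obtain ⟨P, hp, hx, hy⟩ := exists_primeIdeal hxy
    refine ⟨primeHom P hp, fun heq => ?_⟩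
    have := Set.ext_iff.mp heq PUnit.unit
    simp only [primeHom_apply, Set.mem_setOf_eq] at this
    exact this.mp hx hy
  rcases (by by_contra hc; push_neg at hc; exact hab (le_antisymm hc.1 hc.2) :
      ¬a ≤ b ∨ ¬b ≤ a) with h | h
  · exact sep h
  · obtain ⟨f, hf⟩ := sep h
    exact ⟨f, fun e => hf e.symm⟩


lemma hom_ext {G : Set α} (hfree : OmegaFree.{u, v} G)
    (h₁ h₂ : BoundedLatticeHom α Two.{v}) (hagree : ∀ g ∈ G, h₁ g = h₂ g) : h₁ = h₂ := by
  have hop : OmegaPreserving G ⇑h₁ := by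
    intro H hH h0
    have h1 : h₁ (H.inf id) = H.inf (⇑h₁ ∘ id) := map_finset_inf h₁ H id
    rw [h0] at h1
    simpa using h1.symm
  obtain ⟨g₀, -, hun⟩ := hfree Two.{v} ⇑h₁ hop
  exact (hun h₁ fun x _ => rfl).trans (hun h₂ fun x hx => (hagree x hx).symm).symm

lemma finite_of_omegaFree {G : Set α} (hfree : OmegaFree.{u, v} G) (hGfin : G.Finite) :
    Finite α := by
  haveI := hGfin.to_subtype
  haveI : Finite Two.{v} :=
    Finite.of_injective (fun s (u : PUnit.{v + 1}) => u ∈ s) fun s t hst => by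
      ext x; exact iff_of_eq (congrFun hst x)
  haveI : Finite (BoundedLatticeHom α Two.{v}) :=
    Finite.of_injective (fun (h : BoundedLatticeHom α Two.{v}) (g : ↥G) => h g)
      fun h₁ h₂ he => hom_ext hfree _ _ fun g hg => congrFun he ⟨g, hg⟩
  exact Finite.of_injective (fun (a : α) (h : BoundedLatticeHom α Two.{v}) => h a)
    fun a b he => by
      by_contra hne
      obtain ⟨h, hh⟩ := exists_hom_ne hne
      exact hh (congrFun he h)


/-- If `S` is a "subalgebra-closed" set containing `G` and `α` is ω-free over `G`,
then `S` is everything. -/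
lemma generates {G S : Set α} (hfree : OmegaFree.{u, v} G) (hGS : G ⊆ S)
    (hbot : (⊥ : α) ∈ S) (htop : (⊤ : α) ∈ S)
    (hinf : ∀ x ∈ S, ∀ y ∈ S, x ⊓ y ∈ S) (hsup : ∀ x ∈ S, ∀ y ∈ S, x ⊔ y ∈ S)
    (hcompl : ∀ x ∈ S, xᶜ ∈ S) : ∀ a : α, a ∈ S := by
  classical
  intro a
  by_contra ha
  set T : Set α := {s | s ∈ S ∧ (s ≤ a ∨ s ≤ aᶜ)} with hT
  by_cases hTtop : ∃ F : Finset α, ↑F ⊆ T ∧ F.sup id = ⊤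
  · obtain ⟨F, hFT, hFtop⟩ := hTtop
    apply ha
    have key : a = F.sup fun t => a ⊓ t := by
      conv_lhs => rw [← inf_top_eq a, ← hFtop]
      exact Finset.sup_inf_distrib_left F id a
    rw [key]
    refine Finset.sup_induction hbot (fun x hx y hy => hsup x hx y hy) ?_
    intro t ht
    rcases (hFT ht).2 with h | h
    · rw [inf_eq_right.mpr h]
      exact (hFT ht).1
    · have : a ⊓ t ≤ ⊥ := by
        calc a ⊓ t ≤ aᶜᶜ ⊓ aᶜ := inf_le_inf (le_of_eq (compl_compl a).symm) h
        _ = ⊥ := by rw [inf_comm, inf_compl_eq_bot]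
      rw [le_bot_iff.mp this]
      exact hbot
  · -- the ideal generated by T is proper; get a prime ideal P over it
    have hI : Order.IsIdeal {x : α | ∃ F : Finset α, ↑F ⊆ T ∧ x ≤ F.sup id} := by
      constructor
      · intro x y hle ⟨F, h1, h2⟩
        exact ⟨F, h1, hle.trans h2⟩
      · exact ⟨⊥, ∅, by simp⟩
      · rintro x ⟨F₁, hF₁, hx⟩ y ⟨F₂, hF₂, hy⟩
        refine ⟨(F₁ ∪ F₂).sup id, ⟨F₁ ∪ F₂, ?_, le_rfl⟩, ?_, ?_⟩
        · rw [Finset.coe_union]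
          exact Set.union_subset hF₁ hF₂
        · exact hx.trans (Finset.sup_mono Finset.subset_union_left)
        · exact hy.trans (Finset.sup_mono Finset.subset_union_right)
    have hdis : Disjoint ((Order.PFilter.principal (⊤ : α) : Order.PFilter α) : Set α)
        ((hI.toIdeal : Order.Ideal α) : Set α) := by
      rw [Set.disjoint_left]
      intro x hxF hxI
      have hx : (⊤ : α) ≤ x := hxF
      obtain ⟨F, hFT', hle⟩ := hxI
      exact hTtop ⟨F, hFT', top_le_iff.mp ((hx.trans hle))⟩
    obtain ⟨P, hPprime, hIP, hPdis⟩ := DistribLattice.prime_ideal_of_disjoint_filter_ideal hdis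
    have htopP : (⊤ : α) ∉ P :=
      Set.disjoint_left.mp hPdis (Order.PFilter.mem_principal.mpr le_rfl)
    have hTP : ∀ s ∈ T, s ∈ P := by
      intro s hs
      exact hIP ⟨{s}, by simpa using hs, by simp⟩
    set FS : Set α := {s | s ∈ S ∧ s ∉ P} with hFS
    have hFSkey : ∀ s ∈ FS, s ⊓ a ≠ ⊥ ∧ s ⊓ aᶜ ≠ ⊥ := by
      intro s hs
      constructor
      · intro hb
        have hsac : s ≤ aᶜ := by
          have : Disjoint s a := disjoint_iff.mpr hb
          exact this.le_compl_right
        exact hs.2 (hTP s ⟨hs.1, Or.inr hsac⟩)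
      · intro hb
        have hsa : s ≤ a := by
          have : Disjoint s aᶜ := disjoint_iff.mpr hb
          simpa using this.le_compl_right
        exact hs.2 (hTP s ⟨hs.1, Or.inl hsa⟩)
    have hFStop : (⊤ : α) ∈ FS := ⟨htop, htopP⟩
    have hFSinf : ∀ s ∈ FS, ∀ t ∈ FS, s ⊓ t ∈ FS := by
      intro s hs t ht
      refine ⟨hinf s hs.1 t ht.1, fun hmem => ?_⟩
      rcases hPprime.mem_or_mem hmem with h | h
      exacts [hs.2 h, ht.2 h]
    -- given b with `s ⊓ b ≠ ⊥` for all s ∈ FS, produce a prime ideal avoiding b and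
    -- agreeing with P on S
    have main : ∀ b : α, (∀ s ∈ FS, s ⊓ b ≠ ⊥) →
        ∃ Q : Order.Ideal α, Q.IsPrime ∧ b ∉ Q ∧ ∀ s ∈ S, (s ∉ Q ↔ s ∉ P) := by
      intro b hb
      have hpf : Order.IsPFilter {x : α | ∃ s ∈ FS, s ⊓ b ≤ x} := by
        apply Order.IsPFilter.of_def
        · exact ⟨b, ⊤, hFStop, inf_le_right⟩
        · rintro x ⟨s₁, hs₁, hx⟩ y ⟨s₂, hs₂, hy⟩
          refine ⟨s₁ ⊓ s₂ ⊓ b, ⟨s₁ ⊓ s₂, hFSinf s₁ hs₁ s₂ hs₂, le_rfl⟩, ?_, ?_⟩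
          · exact le_trans (inf_le_inf_right b (inf_le_left)) hx
          · exact le_trans (inf_le_inf_right b (inf_le_right)) hy
        · rintro x y hxy ⟨s, hs, hx⟩
          exact ⟨s, hs, hx.trans hxy⟩
      have hdis2 : Disjoint ((hpf.toPFilter : Order.PFilter α) : Set α)
          ((Order.Ideal.principal (⊥ : α) : Order.Ideal α) : Set α) := by
        rw [Set.disjoint_left]
        rintro x ⟨s, hs, hx⟩ hxI
        have h2 : x ≤ ⊥ := hxI
        exact hb s hs (le_bot_iff.mp (hx.trans h2))
      obtain ⟨Q, hQprime, _, hQdis⟩ := DistribLattice.prime_ideal_of_disjoint_filter_ideal hdis2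
      have hmemfil : ∀ x : α, (∃ s ∈ FS, s ⊓ b ≤ x) → x ∉ Q := by
        intro x hx
        exact Set.disjoint_left.mp hQdis hx
      have hbQ : b ∉ Q := hmemfil b ⟨⊤, hFStop, inf_le_right⟩
      refine ⟨Q, hQprime, hbQ, ?_⟩
      intro s hsS
      constructor
      · intro hsQ
        by_contra hsP
        -- s ∈ P, so sᶜ ∈ FS, so sᶜ ∉ Q, but then s ∈ Q
        have hscP : sᶜ ∉ P := by
          intro hc
          exact htopP (by
            have := P.sup_mem hsP hc
            rwa [sup_compl_eq_top] at this)
        have hscFS : sᶜ ∈ FS := ⟨hcompl s hsS, hscP⟩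
        have hscQ : sᶜ ∉ Q := hmemfil sᶜ ⟨sᶜ, hscFS, inf_le_left⟩
        have : s ⊓ sᶜ ∈ Q := by rw [inf_compl_eq_bot]; exact Q.bot_mem
        rcases hQprime.mem_or_mem this with h | h
        exacts [hsQ h, hscQ h]
      · intro hsP
        exact hmemfil s ⟨s, ⟨hsS, hsP⟩, inf_le_left⟩
    obtain ⟨Q₁, hQ₁, haQ₁, hQ₁S⟩ := main a fun s hs => (hFSkey s hs).1
    obtain ⟨Q₂, hQ₂, haQ₂, hQ₂S⟩ := main aᶜ fun s hs => (hFSkey s hs).2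
    have heq : primeHom.{u, v} Q₁ hQ₁ = primeHom.{u, v} Q₂ hQ₂ := by
      apply hom_ext hfree
      intro g hg
      simp only [primeHom_apply]
      ext u
      simp only [Set.mem_setOf_eq]
      rw [hQ₁S g (hGS hg), hQ₂S g (hGS hg)]
    have haQ₂' : a ∈ Q₂ := by
      have : a ⊓ aᶜ ∈ Q₂ := by rw [inf_compl_eq_bot]; exact Q₂.bot_mem
      rcases hQ₂.mem_or_mem this with h | h
      exacts [h, absurd h haQ₂]
    have := Set.ext_iff.mp (DFunLike.congr_fun heq a) PUnit.unit
    simp only [primeHom_apply, Set.mem_setOf_eq] at this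
    exact this.mp haQ₁ haQ₂'


/-- Iterative closure levels of `G` under the Boolean operations. -/
def genLevel (G : Set α) : ℕ → Set α
  | 0 => G ∪ {⊥, ⊤}
  | n + 1 =>
      genLevel G n ∪ Set.image2 (· ⊓ ·) (genLevel G n) (genLevel G n) ∪
        Set.image2 (· ⊔ ·) (genLevel G n) (genLevel G n) ∪ compl '' genLevel G n

lemma genLevel_subset_succ (G : Set α) (n : ℕ) : genLevel G n ⊆ genLevel G (n + 1) :=
  fun _ hx => Or.inl (Or.inl (Or.inl hx))

lemma genLevel_mono (G : Set α) {n m : ℕ} (h : n ≤ m) : genLevel G n ⊆ genLevel G m := by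
  induction m with
  | zero => rw [Nat.le_zero.mp h]
  | succ m ih =>
    rcases Nat.lt_or_ge n (m + 1) with h' | h'
    · exact (ih (Nat.lt_succ_iff.mp h')).trans (genLevel_subset_succ G m)
    · rw [le_antisymm h h']

/-- The union of all closure levels. -/
def genSet (G : Set α) : Set α := ⋃ i : ULift.{u} ℕ, genLevel G i.down

lemma genLevel_subset_genSet (G : Set α) (n : ℕ) : genLevel G n ⊆ genSet G :=
  fun x hx => Set.mem_iUnion.mpr ⟨⟨n⟩, hx⟩

lemma subset_genSet (G : Set α) : G ⊆ genSet G :=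
  fun x hx => genLevel_subset_genSet G 0 (Or.inl hx)

lemma bot_mem_genSet (G : Set α) : (⊥ : α) ∈ genSet G :=
  genLevel_subset_genSet G 0 (Or.inr (by simp))

lemma top_mem_genSet (G : Set α) : (⊤ : α) ∈ genSet G :=
  genLevel_subset_genSet G 0 (Or.inr (by simp))

lemma mem_genSet_two {x y : α} {G : Set α} (hx : x ∈ genSet G) (hy : y ∈ genSet G) :
    ∃ n : ℕ, x ∈ genLevel G n ∧ y ∈ genLevel G n := by
  obtain ⟨⟨n⟩, hn⟩ := Set.mem_iUnion.mp hx
  obtain ⟨⟨m⟩, hm⟩ := Set.mem_iUnion.mp hy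
  exact ⟨max n m, genLevel_mono G (le_max_left n m) hn, genLevel_mono G (le_max_right n m) hm⟩

lemma inf_mem_genSet {G : Set α} : ∀ x ∈ genSet G, ∀ y ∈ genSet G, x ⊓ y ∈ genSet G := by
  intro x hx y hy
  obtain ⟨n, hxn, hyn⟩ := mem_genSet_two hx hy
  exact genLevel_subset_genSet G (n + 1) (Or.inl (Or.inl (Or.inr (Set.mem_image2_of_mem hxn hyn))))

lemma sup_mem_genSet {G : Set α} : ∀ x ∈ genSet G, ∀ y ∈ genSet G, x ⊔ y ∈ genSet G := by
  intro x hx y hy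
  obtain ⟨n, hxn, hyn⟩ := mem_genSet_two hx hy
  exact genLevel_subset_genSet G (n + 1) (Or.inl (Or.inr (Set.mem_image2_of_mem hxn hyn)))

lemma compl_mem_genSet {G : Set α} : ∀ x ∈ genSet G, xᶜ ∈ genSet G := by
  intro x hx
  obtain ⟨⟨n⟩, hn⟩ := Set.mem_iUnion.mp hx
  exact genLevel_subset_genSet G (n + 1) (Or.inr ⟨x, hn, rfl⟩)

lemma mk_genLevel_le {G : Set α} (hG : Cardinal.aleph0 ≤ Cardinal.mk G) (n : ℕ) :
    Cardinal.mk (genLevel G n) ≤ Cardinal.mk G := by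
  induction n with
  | zero =>
    refine le_trans (Cardinal.mk_union_le _ _) ?_
    have h2 : Cardinal.mk ({⊥, ⊤} : Set α) ≤ Cardinal.mk G :=
      le_trans (le_of_lt (((Set.finite_singleton (⊤ : α)).insert ⊥).lt_aleph0)) hG
    calc Cardinal.mk G + Cardinal.mk ({⊥, ⊤} : Set α) ≤ Cardinal.mk G + Cardinal.mk G :=
          add_le_add le_rfl h2
      _ = Cardinal.mk G := Cardinal.add_eq_self hG
  | succ n ih =>
    have him : Cardinal.mk (compl '' genLevel G n : Set α) ≤ Cardinal.mk G :=
      le_trans Cardinal.mk_image_le ih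
    have h2 : ∀ f : α → α → α,
        Cardinal.mk (Set.image2 f (genLevel G n) (genLevel G n)) ≤ Cardinal.mk G := by
      intro f
      refine le_trans Cardinal.mk_image2_le ?_
      calc Cardinal.mk (genLevel G n) * Cardinal.mk (genLevel G n)
          ≤ Cardinal.mk G * Cardinal.mk G := mul_le_mul' ih ih
        _ = Cardinal.mk G := Cardinal.mul_eq_self hG
    refine le_trans (Cardinal.mk_union_le _ _) ?_
    refine le_trans (add_le_add (le_trans (Cardinal.mk_union_le _ _)
      (add_le_add (le_trans (Cardinal.mk_union_le _ _) (add_le_add ih (h2 _))) (h2 _))) him) ?_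
    rw [Cardinal.add_eq_self hG, Cardinal.add_eq_self hG, Cardinal.add_eq_self hG]

lemma mk_genSet_le {G : Set α} (hG : Cardinal.aleph0 ≤ Cardinal.mk G) :
    Cardinal.mk (genSet G) ≤ Cardinal.mk G := by
  refine le_trans (Cardinal.mk_iUnion_le _) ?_
  have h1 : Cardinal.mk (ULift.{u} ℕ) = Cardinal.aleph0 := by simp
  have h2 : ⨆ i : ULift.{u} ℕ, Cardinal.mk (genLevel G i.down) ≤ Cardinal.mk G :=
    ciSup_le' fun i => mk_genLevel_le hG i.down
  calc Cardinal.mk (ULift.{u} ℕ) * ⨆ i : ULift.{u} ℕ, Cardinal.mk (genLevel G i.down)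
      ≤ Cardinal.mk G * Cardinal.mk G := by
        rw [h1]
        exact mul_le_mul' hG h2
    _ = Cardinal.mk G := Cardinal.mul_eq_self hG


lemma omegaPreserving_indicator [Nontrivial α] {G : Set α} {g₀ : α} (hg₀ : g₀ ≠ ⊥) :
    OmegaPreserving G fun x => ({_u | x = g₀} : Two.{v}) := by
  intro H _ hinf
  rcases H.eq_empty_or_nonempty with rfl | hne
  · rw [Finset.inf_empty] at hinf
    exact absurd hinf top_ne_bot
  · obtain ⟨x, hx, hxne⟩ : ∃ x ∈ H, x ≠ g₀ := by
      by_contra hc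
      push_neg at hc
      have : g₀ ≤ H.inf id := Finset.le_inf fun y hy => (hc y hy).ge
      rw [hinf] at this
      exact hg₀ (le_bot_iff.mp this)
    have hle : (H.inf fun y => ({_u | y = g₀} : Two.{v})) ≤ ({_u | x = g₀} : Two.{v}) :=
      Finset.inf_le hx
    have hbx : ({_u | x = g₀} : Two.{v}) = ⊥ := by
      ext u
      simp [hxne]
    rw [hbx] at hle
    exact le_bot_iff.mp hle

variable {W : Type*}

/-- The ultralimit of a family of two-valued homomorphisms. -/
def limitHom (u : W → BoundedLatticeHom α Two.{v}) (𝒰 : Ultrafilter W) :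
    BoundedLatticeHom α Two.{v} where
  toFun a := {_u : PUnit | {w | PUnit.unit ∈ u w a} ∈ 𝒰}
  map_sup' a b := by
    ext x
    have hset : {w | PUnit.unit ∈ u w (a ⊔ b)} =
        {w | PUnit.unit ∈ u w a} ∪ {w | PUnit.unit ∈ u w b} := by
      ext w
      simp [map_sup]
    simp only [Set.sup_eq_union, Set.mem_union, Set.mem_setOf_eq, hset]
    exact Ultrafilter.union_mem_iff
  map_inf' a b := by
    ext x
    have hset : {w | PUnit.unit ∈ u w (a ⊓ b)} =
        {w | PUnit.unit ∈ u w a} ∩ {w | PUnit.unit ∈ u w b} := by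
      ext w
      simp [map_inf]
    simp only [Set.inf_eq_inter, Set.mem_inter_iff, Set.mem_setOf_eq, hset]
    exact Filter.inter_mem_iff
  map_top' := by
    ext x
    simp only [Set.top_eq_univ, Set.mem_univ, iff_true, Set.mem_setOf_eq]
    have hset : {w : W | PUnit.unit ∈ u w ⊤} = Set.univ := by
      ext w
      simp [map_top]
    rw [hset]
    exact Filter.univ_mem
  map_bot' := by
    ext x
    simp only [Set.bot_eq_empty, Set.mem_empty_iff_false, iff_false, Set.mem_setOf_eq]
    have hset : {w : W | PUnit.unit ∈ u w ⊥} = ∅ := by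
      ext w
      simp [map_bot]
    rw [hset]
    exact Ultrafilter.empty_notMem

@[simp] lemma limitHom_apply (u : W → BoundedLatticeHom α Two.{v}) (𝒰 : Ultrafilter W) (a : α) :
    limitHom u 𝒰 a = {_u : PUnit | {w | PUnit.unit ∈ u w a} ∈ 𝒰} := rfl

end OmegaFreeAux

/-- If `A` is an infinite Boolean algebra, ω-free over some `G ⊆ A`, and `W` has the same
cardinality as `A`, then the finite–cofinite algebra on `W` is a homomorphic image of
`A`. -/
theorem finCo_homomorphic_image_of_omegaFree {α : Type u} [BooleanAlgebra α] [Infinite α]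
    (G : Set α) (h : OmegaFree.{u, v} G)
    (W : Type u) (hW : Cardinal.mk W = Cardinal.mk α) :
    ∃ f : BoundedLatticeHom α (FinCo W), Function.Surjective f := by
  classical
  open OmegaFreeAux in
  -- `G` is infinite
  have hGinf : G.Infinite := by
    by_contra hfin
    rw [Set.not_infinite] at hfin
    haveI := OmegaFreeAux.finite_of_omegaFree h hfin
    exact absurd ‹Finite α› (Infinite.not_finite)
  haveI := hGinf.to_subtype
  have hGcard : Cardinal.aleph0 ≤ Cardinal.mk G := Cardinal.aleph0_le_mk ↥G
  -- `G` generates `α`, hence `#α ≤ #G`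
  have hall : ∀ a : α, a ∈ OmegaFreeAux.genSet G :=
    OmegaFreeAux.generates h (OmegaFreeAux.subset_genSet G) (OmegaFreeAux.bot_mem_genSet G)
      (OmegaFreeAux.top_mem_genSet G) OmegaFreeAux.inf_mem_genSet OmegaFreeAux.sup_mem_genSet
      OmegaFreeAux.compl_mem_genSet
  have hαle : Cardinal.mk α ≤ Cardinal.mk G := by
    have huniv : Cardinal.mk (OmegaFreeAux.genSet G) = Cardinal.mk α := by
      rw [Set.eq_univ_of_forall hall, Cardinal.mk_univ]
    rw [← huniv]
    exact OmegaFreeAux.mk_genSet_le hGcard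
  -- an embedding of `W` into the nonzero elements of `G`
  have hG'inf : (G \ {⊥}).Infinite := hGinf.diff (Set.finite_singleton ⊥)
  haveI := hG'inf.to_subtype
  have hG'card : Cardinal.aleph0 ≤ Cardinal.mk ↥(G \ {⊥}) := Cardinal.aleph0_le_mk _
  have hGG' : Cardinal.mk G ≤ Cardinal.mk ↥(G \ {⊥}) := by
    have hsub : G ⊆ (G \ {⊥}) ∪ {⊥} := by
      rw [Set.diff_union_self]
      exact Set.subset_union_left
    calc Cardinal.mk G ≤ Cardinal.mk ↥((G \ {⊥}) ∪ {⊥}) := Cardinal.mk_le_mk_of_subset hsub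
      _ ≤ Cardinal.mk ↥(G \ {⊥}) + Cardinal.mk ({⊥} : Set α) := Cardinal.mk_union_le _ _
      _ = Cardinal.mk ↥(G \ {⊥}) + 1 := by rw [Cardinal.mk_singleton]
      _ = Cardinal.mk ↥(G \ {⊥}) := Cardinal.add_one_eq hG'card
  obtain ⟨e⟩ : Nonempty (W ↪ ↥(G \ {⊥})) := by
    rw [← Cardinal.le_def]
    rw [hW]
    exact hαle.trans hGG'
  set gw : W → α := fun w => ((e w : ↥(G \ {⊥})) : α) with hgw
  have gwG : ∀ w, gw w ∈ G := fun w => (e w).2.1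
  have gwne : ∀ w, gw w ≠ ⊥ := fun w hb => (e w).2.2 hb
  have gwinj : Function.Injective gw := fun w₁ w₂ hww =>
    e.injective (Subtype.coe_injective hww)
  -- the family of two-valued homomorphisms
  have hu : ∀ w : W, ∃ hw : BoundedLatticeHom α (OmegaFreeAux.Two.{v}),
      ∀ g ∈ G, hw g = {_u | g = gw w} := fun w =>
    (h (OmegaFreeAux.Two.{v}) _ (OmegaFreeAux.omegaPreserving_indicator (gwne w))).exists
  choose u hu using hu
  -- all ultralimits along ultrafilters extending the cofinite filter agree
  have hLbot : ∀ 𝒰 : Ultrafilter W, (𝒰 : Filter W) ≤ Filter.cofinite →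
      ∀ g ∈ G, OmegaFreeAux.limitHom u 𝒰 g = (⊥ : OmegaFreeAux.Two.{v}) := by
    intro 𝒰 hco g hg
    have hset : {w | PUnit.unit ∈ u w g} = {w | g = gw w} := by
      ext w
      simp only [Set.mem_setOf_eq]
      rw [hu w g hg]
      simp
    have hsub : ({w | g = gw w} : Set W).Subsingleton := by
      intro w₁ hw₁ w₂ hw₂
      exact gwinj (hw₁.symm.trans hw₂)
    have hnot : {w | PUnit.unit ∈ u w g} ∉ 𝒰 := by
      rw [hset]
      exact Ultrafilter.compl_mem_iff_notMem.mp (hco (hsub.finite.compl_mem_cofinite))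
    ext x
    simp only [OmegaFreeAux.limitHom_apply, Set.mem_setOf_eq, Set.bot_eq_empty,
      Set.mem_empty_iff_false, iff_false]
    exact hnot
  have hLeq : ∀ 𝒰₁ 𝒰₂ : Ultrafilter W, (𝒰₁ : Filter W) ≤ Filter.cofinite →
      (𝒰₂ : Filter W) ≤ Filter.cofinite →
      OmegaFreeAux.limitHom u 𝒰₁ = OmegaFreeAux.limitHom u 𝒰₂ := by
    intro 𝒰₁ 𝒰₂ h1 h2
    exact OmegaFreeAux.hom_ext h _ _ fun g hg => (hLbot 𝒰₁ h1 g hg).trans (hLbot 𝒰₂ h2 g hg).symm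
  -- each value set is finite or cofinite
  have fincof : ∀ a : α, ({w | PUnit.unit ∈ u w a} : Set W).Finite ∨
      ({w | PUnit.unit ∈ u w a} : Set W)ᶜ.Finite := by
    intro a
    by_contra hc
    push_neg at hc
    set s : Set W := {w | PUnit.unit ∈ u w a} with hs
    have hs1 : s.Infinite := hc.1
    have hs2 : sᶜ.Infinite := hc.2
    haveI n1 : (Filter.cofinite ⊓ Filter.principal s).NeBot :=
      Filter.cofinite_inf_principal_neBot_iff.mpr hs1
    haveI n2 : (Filter.cofinite ⊓ Filter.principal sᶜ).NeBot :=
      Filter.cofinite_inf_principal_neBot_iff.mpr hs2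
    set 𝒰₁ := Ultrafilter.of (Filter.cofinite ⊓ Filter.principal s) with h𝒰₁
    set 𝒰₂ := Ultrafilter.of (Filter.cofinite ⊓ Filter.principal sᶜ) with h𝒰₂
    have hco1 : (𝒰₁ : Filter W) ≤ Filter.cofinite := (Ultrafilter.of_le _).trans inf_le_left
    have hco2 : (𝒰₂ : Filter W) ≤ Filter.cofinite := (Ultrafilter.of_le _).trans inf_le_left
    have hmem1 : s ∈ 𝒰₁ :=
      Filter.le_principal_iff.mp ((Ultrafilter.of_le _).trans inf_le_right)
    have hmem2 : sᶜ ∈ 𝒰₂ :=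
      Filter.le_principal_iff.mp ((Ultrafilter.of_le _).trans inf_le_right)
    have hnmem2 : s ∉ 𝒰₂ := Ultrafilter.compl_mem_iff_notMem.mp hmem2
    have heq := Set.ext_iff.mp (DFunLike.congr_fun (hLeq 𝒰₁ 𝒰₂ hco1 hco2) a) PUnit.unit
    simp only [OmegaFreeAux.limitHom_apply, Set.mem_setOf_eq] at heq
    exact hnmem2 (heq.mp hmem1)
  -- the homomorphism into `FinCo W`
  let f : BoundedLatticeHom α (FinCo W) :=
    { toFun := fun a => ⟨{w | PUnit.unit ∈ u w a}, fincof a⟩,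
      map_sup' := by
        intro a b
        refine Subtype.ext ?_
        show {w | PUnit.unit ∈ u w (a ⊔ b)} =
          {w | PUnit.unit ∈ u w a} ∪ {w | PUnit.unit ∈ u w b}
        ext w
        simp [map_sup],
      map_inf' := by
        intro a b
        refine Subtype.ext ?_
        show {w | PUnit.unit ∈ u w (a ⊓ b)} =
          {w | PUnit.unit ∈ u w a} ∩ {w | PUnit.unit ∈ u w b}
        ext w
        simp [map_inf],
      map_top' := by
        refine Subtype.ext ?_
        show {w : W | PUnit.unit ∈ u w ⊤} = Set.univ
        ext w
        simp [map_top],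
      map_bot' := by
        refine Subtype.ext ?_
        show {w : W | PUnit.unit ∈ u w ⊥} = ∅
        ext w
        simp [map_bot] }
  have fval : ∀ a : α, (f a).1 = {w | PUnit.unit ∈ u w a} := fun a => rfl
  refine ⟨f, ?_⟩
  -- surjectivity
  have claim : ∀ t : Finset W, ∃ a : α, {w | PUnit.unit ∈ u w a} = (t : Set W) := by
    intro t
    induction t using Finset.induction with
    | empty =>
      refine ⟨⊥, ?_⟩
      ext w
      simp [map_bot]
    | @insert w₀ t hw₀ ih =>
      obtain ⟨a, ha⟩ := ih
      refine ⟨gw w₀ ⊔ a, ?_⟩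
      ext w
      have h1 : PUnit.unit ∈ u w (gw w₀ ⊔ a) ↔
          PUnit.unit ∈ u w (gw w₀) ∨ PUnit.unit ∈ u w a := by
        rw [map_sup]
        rfl
      have h2 : PUnit.unit ∈ u w (gw w₀) ↔ w = w₀ := by
        rw [hu w (gw w₀) (gwG w₀)]
        simp only [Set.mem_setOf_eq]
        exact ⟨fun hh => (gwinj hh).symm, fun hh => by rw [hh]⟩
      have h3 : PUnit.unit ∈ u w a ↔ w ∈ t := by
        rw [show (PUnit.unit ∈ u w a) = (w ∈ {w | PUnit.unit ∈ u w a}) from rfl, ha]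
        simp
      simp only [Set.mem_setOf_eq, h1, h2, h3, Finset.coe_insert, Set.mem_insert_iff,
        Finset.mem_coe]
  intro s
  rcases s.2 with hfin | hcof
  · obtain ⟨a, ha⟩ := claim hfin.toFinset
    refine ⟨a, Subtype.ext ?_⟩
    rw [fval a, ha]
    simp [Set.Finite.coe_toFinset]
  · obtain ⟨a, ha⟩ := claim hcof.toFinset
    refine ⟨aᶜ, ?_⟩
    have hcompl : f aᶜ = (f a)ᶜ := map_compl' f a
    refine Subtype.ext ?_
    rw [hcompl]
    show (f a).1ᶜ = s.1
    rw [fval a, ha]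
    simp [Set.Finite.coe_toFinset]
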